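/- Fix γ ∈ (0,1) and ψ: ℝ → ℝ strictly convex, continuously differentiable, strictly increasing with ψ'(ℝ) = (0,∞). For every w > 0 there exists a unique l_γ(w) ∈ (0, w) solving γψ'(w − l) + (1−γ)ψ'(−l) = ψ'(0), and the resulting response function ρ_γ(w) = γψ'(w − l_γ(w)) is strictly increasing and continuous in w, with ρ_γ(w) → γ as w → 0 and ρ_γ(w) → 1 as w → ∞. -/

import Mathlib

open Filter

/-- Fix `γ ∈ (0,1)` and `ψ : ℝ → ℝ` strictly convex, continuously differentiable, strictly
increasing with `ψ'(ℝ) = (0,∞)`, `ψ(0) = 0`, `ψ'(0) = 1`. For every `w > 0` there is a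
unique `l_γ(w) ∈ (0,w)` solving `γψ'(w−l) + (1−γ)ψ'(−l) = ψ'(0)`, and the response function
`ρ_γ(w) = γψ'(w − l_γ(w))` is strictly increasing and continuous on `(0,∞)`, tends to `γ`
as `w → 0⁺` and tends to `1` as `w → ∞`. -/
theorem stmt16 (γ : ℝ) (hγ : γ ∈ Set.Ioo (0 : ℝ) 1)
    (ψ ψd : ℝ → ℝ)
    (hderiv : ∀ t, HasDerivAt ψ (ψd t) t) (hcont : Continuous ψd)
    (hmono : StrictMono ψd) (hrange : Set.range ψd = Set.Ioi (0 : ℝ))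
    (hψ0 : ψ 0 = 0) (hψd0 : ψd 0 = 1) :
    ∃ l : ℝ → ℝ,
      (∀ w : ℝ, 0 < w →
        (0 < l w ∧ l w < w ∧ γ * ψd (w - l w) + (1 - γ) * ψd (-(l w)) = ψd 0)) ∧
      (∀ w : ℝ, 0 < w → ∀ l' : ℝ,
        γ * ψd (w - l') + (1 - γ) * ψd (-l') = ψd 0 → l' = l w) ∧
      StrictMonoOn (fun w => γ * ψd (w - l w)) (Set.Ioi 0) ∧
      ContinuousOn (fun w => γ * ψd (w - l w)) (Set.Ioi 0) ∧
      Tendsto (fun w => γ * ψd (w - l w)) (nhdsWithin 0 (Set.Ioi 0)) (nhds γ) ∧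
      Tendsto (fun w => γ * ψd (w - l w)) atTop (nhds 1) := by
  obtain ⟨hγ0, hγ1⟩ := hγ
  have hγ1' : (0:ℝ) < 1 - γ := by linarith
  have hpos : ∀ t, 0 < ψd t := fun t => by
    have : ψd t ∈ Set.range ψd := Set.mem_range_self t
    rwa [hrange] at this
  have hg : ∀ x : ℝ, 0 < x → ∃ t, ψd t = x := fun x hx => by
    have : x ∈ Set.range ψd := by rw [hrange]; exact hx
    exact this
  -- strict antitonicity of the defining function in `l`
  have hanti : ∀ w : ℝ, StrictAnti (fun x : ℝ => γ * ψd (w - x) + (1 - γ) * ψd (-x)) := by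
    intro w x1 x2 h12
    have h1 : ψd (w - x2) < ψd (w - x1) := hmono (by linarith)
    have h2 : ψd (-x2) < ψd (-x1) := hmono (by linarith)
    have := mul_lt_mul_of_pos_left h1 hγ0
    have := mul_lt_mul_of_pos_left h2 hγ1'
    dsimp only
    linarith
  -- existence
  have hex : ∀ w : ℝ, 0 < w →
      ∃ x, (0 < x ∧ x < w) ∧ γ * ψd (w - x) + (1 - γ) * ψd (-x) = 1 := by
    intro w hw
    set f : ℝ → ℝ := fun x => γ * ψd (w - x) + (1 - γ) * ψd (-x) with hf
    have hcf : ContinuousOn f (Set.Icc 0 w) :=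
      ((continuous_const.mul (hcont.comp (continuous_const.sub continuous_id))).add
        (continuous_const.mul (hcont.comp continuous_neg))).continuousOn
    have hf0 : 1 < f 0 := by
      have : ψd 0 < ψd w := hmono hw
      simp only [hf, sub_zero, neg_zero, hψd0] at this ⊢
      nlinarith
    have hfw : f w < 1 := by
      have : ψd (-w) < ψd 0 := hmono (by linarith)
      simp only [hf, sub_self, hψd0] at this ⊢
      nlinarith
    have := intermediate_value_Ioo' (le_of_lt hw) hcf (Set.mem_Ioo.2 ⟨hfw, hf0⟩)
    obtain ⟨x, hx, hfx⟩ := this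
    exact ⟨x, ⟨hx.1, hx.2⟩, hfx⟩
  classical
  set l : ℝ → ℝ := fun w => if h : 0 < w then (hex w h).choose else 0 with hldef
  have hl : ∀ w : ℝ, 0 < w →
      (0 < l w ∧ l w < w ∧ γ * ψd (w - l w) + (1 - γ) * ψd (-(l w)) = 1) := by
    intro w hw
    have := (hex w hw).choose_spec
    simp only [hldef, dif_pos hw]
    exact ⟨this.1.1, this.1.2, this.2⟩
  -- uniqueness
  have huniq : ∀ w : ℝ, 0 < w → ∀ l' : ℝ,
      γ * ψd (w - l') + (1 - γ) * ψd (-l') = ψd 0 → l' = l w := by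
    intro w hw l' h'
    have h1 : γ * ψd (w - l') + (1 - γ) * ψd (-l') =
        γ * ψd (w - l w) + (1 - γ) * ψd (-(l w)) := by
      rw [h', hψd0, (hl w hw).2.2]
    exact (hanti w).injective h1
  -- bounds on ρ
  have hbounds : ∀ w : ℝ, 0 < w → γ * ψd (w - l w) ∈ Set.Ioo γ 1 := by
    intro w hw
    obtain ⟨h1, h2, h3⟩ := hl w hw
    constructor
    · have : ψd 0 < ψd (w - l w) := hmono (by linarith)
      rw [hψd0] at this; nlinarith
    · have := hpos (-(l w)); nlinarith
  -- strict monotonicity of ρ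
  have hsm : StrictMonoOn (fun w => γ * ψd (w - l w)) (Set.Ioi 0) := by
    intro w1 hw1 w2 hw2 h12
    simp only [Set.mem_Ioi] at hw1 hw2
    obtain ⟨ha1, hb1, hc1⟩ := hl w1 hw1
    obtain ⟨ha2, hb2, hc2⟩ := hl w2 hw2
    by_contra hcon
    push_neg at hcon
    have hle : ψd (w2 - l w2) ≤ ψd (w1 - l w1) :=
      le_of_mul_le_mul_left hcon hγ0
    have hle2 : w2 - l w2 ≤ w1 - l w1 := hmono.le_iff_le.1 hle
    have hll : l w1 < l w2 := by linarith
    have h2 : ψd (-(l w2)) < ψd (-(l w1)) := hmono (by linarith)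
    have := mul_lt_mul_of_pos_left h2 hγ1'
    have := mul_le_mul_of_nonneg_left hle (le_of_lt hγ0)
    linarith
  -- surjectivity onto Ioo γ 1
  have hsurj : ∀ y ∈ Set.Ioo γ 1, ∃ w : ℝ, 0 < w ∧ γ * ψd (w - l w) = y := by
    intro y hy
    obtain ⟨hyγ, hy1⟩ := hy
    obtain ⟨a, ha⟩ := hg (y / γ) (div_pos (by linarith) hγ0)
    obtain ⟨b, hb⟩ := hg ((1 - y) / (1 - γ)) (div_pos (by linarith) hγ1')
    have ha0 : 0 < a := by
      have : ψd 0 < ψd a := by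
        rw [ha, hψd0]
        rw [lt_div_iff₀ hγ0]; linarith
      exact hmono.lt_iff_lt.1 this
    have hb0 : b < 0 := by
      have : ψd b < ψd 0 := by
        rw [hb, hψd0]
        rw [div_lt_one hγ1']; linarith
      exact hmono.lt_iff_lt.1 this
    refine ⟨a - b, by linarith, ?_⟩
    have heq : γ * ψd (a - b - (-b)) + (1 - γ) * ψd (-(-b)) = ψd 0 := by
      rw [hψd0]
      have h1 : a - b - (-b) = a := by ring
      have h2 : -(-b) = b := by ring
      rw [h1, h2, ha, hb]
      field_simp
      ring
    have := huniq (a - b) (by linarith) (-b) heq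
    rw [← this]
    have h1 : a - b - (-b) = a := by ring
    rw [h1, ha]
    field_simp
  -- continuity
  have hcontOn : ContinuousOn (fun w => γ * ψd (w - l w)) (Set.Ioi 0) := by
    intro a ha
    have haI : a ∈ Set.Ioi (0:ℝ) := ha
    refine (StrictMonoOn.continuousAt_of_image_mem_nhds hsm
      (isOpen_Ioi.mem_nhds haI) ?_).continuousWithinAt
    refine mem_of_superset (isOpen_Ioo.mem_nhds (hbounds a haI)) ?_
    intro y hy
    obtain ⟨w, hw, hwy⟩ := hsurj y hy
    exact ⟨w, hw, hwy⟩
  -- limit at 0⁺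
  have hlim0 : Tendsto (fun w => γ * ψd (w - l w)) (nhdsWithin 0 (Set.Ioi 0)) (nhds γ) := by
    have h1 : Tendsto (fun w => w - l w) (nhdsWithin 0 (Set.Ioi 0)) (nhds 0) := by
      refine tendsto_of_tendsto_of_tendsto_of_le_of_le' tendsto_const_nhds
        (tendsto_id.mono_left nhdsWithin_le_nhds) ?_ ?_
      · filter_upwards [self_mem_nhdsWithin] with w hw
        have := hl w hw
        linarith [this.2.1]
      · filter_upwards [self_mem_nhdsWithin] with w hw
        have := hl w hw
        simp only [id_eq]
        linarith [this.1]
    have h2 : Tendsto (fun w => ψd (w - l w)) (nhdsWithin 0 (Set.Ioi 0)) (nhds 1) := by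
      have := (hcont.tendsto 0).comp h1
      rwa [hψd0] at this
    have := h2.const_mul γ
    simpa using this
  -- limit at ∞
  have hlimtop : Tendsto (fun w => γ * ψd (w - l w)) atTop (nhds 1) := by
    rw [tendsto_order]
    constructor
    · intro y hy
      rcases le_or_gt y γ with hyγ | hyγ
      · filter_upwards [eventually_gt_atTop (0:ℝ)] with w hw
        exact lt_of_le_of_lt hyγ (hbounds w hw).1
      · obtain ⟨w0, hw0, hw0y⟩ := hsurj y ⟨hyγ, hy⟩
        filter_upwards [eventually_gt_atTop w0] with w hw
        have hwpos : 0 < w := lt_trans hw0 hw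
        calc y = γ * ψd (w0 - l w0) := hw0y.symm
          _ < γ * ψd (w - l w) := hsm hw0 hwpos hw
    · intro y hy
      filter_upwards [eventually_gt_atTop (0:ℝ)] with w hw
      exact lt_trans (hbounds w hw).2 hy
  refine ⟨l, ?_, huniq, hsm, hcontOn, hlim0, hlimtop⟩
  intro w hw
  obtain ⟨h1, h2, h3⟩ := hl w hw
  exact ⟨h1, h2, by rw [hψd0]; exact h3⟩
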